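/- Let ρ_E be a positive definite d×d density matrix with eigenvalues λ₁,…,λ_d > 0 and orthonormal eigenvectors θ₁,…,θ_d, and let λ_h := (Σ_{i=1}^d λ_i^{-1})^{-1}. Let p₀, p₁ ≥ 0 with p₀ + p₁ = 1, η ∈ [0,1], γ := p₁(1−η) − p₀, and assume γ < 0 and p₁η + γ·λ_h > 0 (Region III). Then: (a) for every unit vector ψ ∈ ℂ^d ⊗ ℂ^d with reduced state ρ_B on the second factor, ‖p₁η·|ψ⟩⟨ψ| + γ·(ρ_E ⊗ ρ_B)‖₁ ≤ p₁η − γ + 2γλ_h; (b) equality holds for ψ_h := Σ_i √(λ_h/λ_i)·θ_i ⊗ θ_i. Consequently, the minimum error over all bipartite pure signal states equals P_err = p₀ + γ(1 − λ_h). -/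

import Mathlib

open Matrix BigOperators Kronecker ComplexOrder

/-- The trace norm of a Hermitian matrix: the sum of the absolute values of its eigenvalues. -/
noncomputable def traceNorm {n : Type*} [Fintype n] [DecidableEq n]
    {A : Matrix n n ℂ} (hA : A.IsHermitian) : ℝ :=
  ∑ i, |hA.eigenvalues i|

set_option linter.unusedSectionVars false
set_option maxHeartbeats 1000000

variable {n : Type*} [Fintype n] [DecidableEq n]

lemma qi_dot_self (u : n → ℂ) : star u ⬝ᵥ u = ((∑ p, Complex.normSq (u p) : ℝ) : ℂ) := by
  simp [dotProduct, Complex.normSq_eq_conj_mul_self]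

lemma qi_y {A : Matrix n n ℂ} (hA : A.IsHermitian) (x : n → ℂ) (j : n) :
    (star (hA.eigenvectorUnitary : Matrix n n ℂ) *ᵥ x) j
      = star (⇑(hA.eigenvectorBasis j)) ⬝ᵥ x := by
  simp [mulVec, dotProduct, Matrix.star_apply]

lemma qi_quad_expand {A : Matrix n n ℂ} (hA : A.IsHermitian) (x : n → ℂ) :
    star x ⬝ᵥ (A *ᵥ x)
      = ∑ j, (hA.eigenvalues j : ℂ) *
          ((Complex.normSq (star (⇑(hA.eigenvectorBasis j)) ⬝ᵥ x) : ℝ) : ℂ) := by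
  have h1 : star x ⬝ᵥ (A *ᵥ x)
      = star (star (hA.eigenvectorUnitary : Matrix n n ℂ) *ᵥ x) ⬝ᵥ
        (diagonal (RCLike.ofReal ∘ hA.eigenvalues) *ᵥ (star (hA.eigenvectorUnitary : Matrix n n ℂ) *ᵥ x)) := by
    conv_lhs => rw [hA.spectral_theorem, Unitary.conjStarAlgAut_apply]
    rw [← mulVec_mulVec, ← mulVec_mulVec, dotProduct_mulVec]
    congr 1
    rw [star_mulVec]
    congr 1
    simp [← Matrix.star_eq_conjTranspose]
  rw [h1, dotProduct]
  refine Finset.sum_congr rfl fun j _ => ?_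
  rw [mulVec_diagonal, Pi.star_apply, qi_y hA x j, Complex.normSq_eq_conj_mul_self]
  simp only [Function.comp_apply, Complex.star_def]
  rw [mul_left_comm]
  rfl

lemma qi_parseval {A : Matrix n n ℂ} (hA : A.IsHermitian) (x : n → ℂ) :
    ∑ j, Complex.normSq (star (⇑(hA.eigenvectorBasis j)) ⬝ᵥ x) = ∑ p, Complex.normSq (x p) := by
  have h1 : star (star (hA.eigenvectorUnitary : Matrix n n ℂ) *ᵥ x) ⬝ᵥ
      (star (hA.eigenvectorUnitary : Matrix n n ℂ) *ᵥ x) = star x ⬝ᵥ x := by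
    rw [star_mulVec, dotProduct_mulVec, vecMul_vecMul]
    have hUU : (star (hA.eigenvectorUnitary : Matrix n n ℂ))ᴴ *
        star (hA.eigenvectorUnitary : Matrix n n ℂ) = 1 := by
      simp only [← Matrix.star_eq_conjTranspose, star_star]
      exact mem_unitaryGroup_iff.mp hA.eigenvectorUnitary.2
    rw [hUU, vecMul_one]
  have h2 : ((∑ j, Complex.normSq ((star (hA.eigenvectorUnitary : Matrix n n ℂ) *ᵥ x) j) : ℝ) : ℂ)
      = ((∑ p, Complex.normSq (x p) : ℝ) : ℂ) := by
    rw [← qi_dot_self, ← qi_dot_self]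
    exact h1
  have h3 := Complex.ofReal_injective h2
  calc ∑ j, Complex.normSq (star (⇑(hA.eigenvectorBasis j)) ⬝ᵥ x)
      = ∑ j, Complex.normSq ((star (hA.eigenvectorUnitary : Matrix n n ℂ) *ᵥ x) j) :=
        Finset.sum_congr rfl fun j _ => by rw [qi_y hA x j]
    _ = ∑ p, Complex.normSq (x p) := h3

lemma qi_trace {A : Matrix n n ℂ} (hA : A.IsHermitian) :
    ((∑ j, hA.eigenvalues j : ℝ) : ℂ) = A.trace := by
  conv_rhs => rw [hA.spectral_theorem, Unitary.conjStarAlgAut_apply]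
  rw [trace_mul_cycle]
  have hUU : star (hA.eigenvectorUnitary : Matrix n n ℂ) * (hA.eigenvectorUnitary : Matrix n n ℂ) = 1 :=
    mem_unitaryGroup_iff'.mp hA.eigenvectorUnitary.2
  rw [hUU, one_mul, trace_diagonal]
  push_cast
  rfl

lemma qi_rank_one_mulVec (x v : n → ℂ) :
    vecMulVec x (star x) *ᵥ v = (star x ⬝ᵥ v) • x := by
  ext p
  simp only [vecMulVec_apply, mulVec, dotProduct, Pi.smul_apply, smul_eq_mul, Finset.sum_mul]
  exact Finset.sum_congr rfl fun q _ => by ring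

lemma qi_rank_one_form (x v : n → ℂ) :
    star v ⬝ᵥ (vecMulVec x (star x) *ᵥ v) = ((Complex.normSq (star x ⬝ᵥ v) : ℝ) : ℂ) := by
  rw [qi_rank_one_mulVec, dotProduct_smul, star_dotProduct]
  simp only [smul_eq_mul, star_star]
  rw [mul_comm, Complex.normSq_eq_conj_mul_self]
  simp [Complex.star_def]
variable {n : Type*} [Fintype n] [DecidableEq n]

lemma qi_sum_mulVec {ι : Type*} (s : Finset ι) (M : ι → Matrix n n ℂ) (v : n → ℂ) :
    (∑ i ∈ s, M i) *ᵥ v = ∑ i ∈ s, M i *ᵥ v := by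
  ext p
  simp only [mulVec, dotProduct, Finset.sum_apply, Matrix.sum_apply, Finset.sum_mul]
  rw [Finset.sum_comm]

lemma qi_dotProduct_sum {ι : Type*} (s : Finset ι) (u : n → ℂ) (f : ι → n → ℂ) :
    u ⬝ᵥ (∑ i ∈ s, f i) = ∑ i ∈ s, u ⬝ᵥ f i := by
  simp only [dotProduct, Finset.sum_apply, Finset.mul_sum]
  rw [Finset.sum_comm]

variable {d : ℕ}

/-- The rank-one factors in the decomposition of `ρE ⊗ₖ ρB`. -/
def qiZ (θ : Fin d → Fin d → ℂ) (ψ : Fin d × Fin d → ℂ) (i m : Fin d) :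
    Fin d × Fin d → ℂ := fun p => θ i p.1 * ψ (m, p.2)

lemma qi_complete (θ : Fin d → Fin d → ℂ)
    (hortho : ∀ i j, star (θ i) ⬝ᵥ θ j = if i = j then 1 else 0) (j j' : Fin d) :
    ∑ i, θ i j * star (θ i j') = if j = j' then 1 else 0 := by
  let U : Matrix (Fin d) (Fin d) ℂ := Matrix.of fun j i => θ i j
  have hU : Uᴴ * U = 1 := by
    ext i i'
    have h := hortho i i'
    simpa [U, Matrix.mul_apply, Matrix.conjTranspose_apply, dotProduct,
      Matrix.one_apply] using h
  have hU2 : U * Uᴴ = 1 := mul_eq_one_comm.mp hU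
  calc ∑ i, θ i j * star (θ i j') = (U * Uᴴ) j j' := by
        simp [U, Matrix.mul_apply, Matrix.conjTranspose_apply]
    _ = if j = j' then 1 else 0 := by rw [hU2]; simp [Matrix.one_apply]

lemma qi_spectral (ρE : Matrix (Fin d) (Fin d) ℂ) (lam : Fin d → ℝ)
    (θ : Fin d → Fin d → ℂ)
    (hortho : ∀ i j, star (θ i) ⬝ᵥ θ j = if i = j then 1 else 0)
    (heig : ∀ i, ρE.mulVec (θ i) = (lam i : ℂ) • θ i) (j j' : Fin d) :
    ρE j j' = ∑ i, (lam i : ℂ) * (θ i j * star (θ i j')) := by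
  have h1 : ρE j j' = ∑ j'', ρE j j'' * (if j'' = j' then (1 : ℂ) else 0) := by
    simp
  rw [h1]
  have h2 : ∀ j'', (if j'' = j' then (1:ℂ) else 0) = ∑ i, θ i j'' * star (θ i j') :=
    fun j'' => (qi_complete θ hortho j'' j').symm
  simp_rw [h2, Finset.mul_sum]
  rw [Finset.sum_comm]
  refine Finset.sum_congr rfl fun i _ => ?_
  have h3 : (ρE *ᵥ θ i) j = (lam i : ℂ) * θ i j := by rw [heig]; simp
  calc ∑ j'', ρE j j'' * (θ i j'' * star (θ i j'))
      = (∑ j'', ρE j j'' * θ i j'') * star (θ i j') := by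
        rw [Finset.sum_mul]; exact Finset.sum_congr rfl fun _ _ => by ring
    _ = ((ρE *ᵥ θ i) j) * star (θ i j') := rfl
    _ = (lam i : ℂ) * (θ i j * star (θ i j')) := by rw [h3]; ring

lemma qi_K_decomp (ρE : Matrix (Fin d) (Fin d) ℂ) (lam : Fin d → ℝ)
    (θ : Fin d → Fin d → ℂ)
    (hortho : ∀ i j, star (θ i) ⬝ᵥ θ j = if i = j then 1 else 0)
    (heig : ∀ i, ρE.mulVec (θ i) = (lam i : ℂ) • θ i) (ψ : Fin d × Fin d → ℂ) :
    ρE ⊗ₖ (Matrix.of fun k l => ∑ i, ψ (i, k) * star (ψ (i, l)))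
      = ∑ q : Fin d × Fin d,
          (lam q.1 : ℂ) • vecMulVec (qiZ θ ψ q.1 q.2) (star (qiZ θ ψ q.1 q.2)) := by
  ext ⟨j, k⟩ ⟨j', k'⟩
  rw [Matrix.kroneckerMap_apply, qi_spectral ρE lam θ hortho heig]
  simp only [Matrix.of_apply, Finset.sum_apply, Matrix.sum_apply, Matrix.smul_apply,
    vecMulVec_apply, qiZ, Pi.star_apply, smul_eq_mul, star_mul']
  rw [Finset.sum_mul_sum]
  conv_rhs => rw [Fintype.sum_prod_type]
  exact Finset.sum_congr rfl fun i _ => Finset.sum_congr rfl fun m _ => by ring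

lemma qi_claim1 (θ : Fin d → Fin d → ℂ)
    (hortho : ∀ i j, star (θ i) ⬝ᵥ θ j = if i = j then 1 else 0)
    (ψ v : Fin d × Fin d → ℂ) :
    star ψ ⬝ᵥ v = ∑ i, ∑ m, θ i m * (star (qiZ θ ψ i m) ⬝ᵥ v) := by
  have expand : ∀ i m : Fin d, θ i m * (star (qiZ θ ψ i m) ⬝ᵥ v)
      = ∑ p : Fin d × Fin d, (star (ψ (m, p.2)) * v p) * (θ i m * star (θ i p.1)) := by
    intro i m
    simp only [dotProduct, qiZ, Pi.star_apply, star_mul', Finset.mul_sum]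
    exact Finset.sum_congr rfl fun p _ => by ring
  symm
  simp_rw [expand]
  calc ∑ i, ∑ m, ∑ p : Fin d × Fin d, (star (ψ (m, p.2)) * v p) * (θ i m * star (θ i p.1))
      = ∑ m, ∑ i, ∑ p : Fin d × Fin d, (star (ψ (m, p.2)) * v p) * (θ i m * star (θ i p.1)) :=
        Finset.sum_comm
    _ = ∑ m, ∑ p : Fin d × Fin d, ∑ i, (star (ψ (m, p.2)) * v p) * (θ i m * star (θ i p.1)) :=
        Finset.sum_congr rfl fun m _ => Finset.sum_comm
    _ = ∑ m, ∑ p : Fin d × Fin d, (star (ψ (m, p.2)) * v p) * (if m = p.1 then 1 else 0) := by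
        refine Finset.sum_congr rfl fun m _ => Finset.sum_congr rfl fun p _ => ?_
        rw [← Finset.mul_sum, qi_complete θ hortho m p.1]
    _ = ∑ p : Fin d × Fin d, ∑ m, (star (ψ (m, p.2)) * v p) * (if m = p.1 then 1 else 0) :=
        Finset.sum_comm
    _ = star ψ ⬝ᵥ v := by
        simp only [mul_ite, mul_one, mul_zero, Finset.sum_ite_eq', Finset.mem_univ, if_true]
        exact Finset.sum_congr rfl fun p _ => rfl

lemma qi_key (ρE : Matrix (Fin d) (Fin d) ℂ) (lam : Fin d → ℝ)
    (θ : Fin d → Fin d → ℂ)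
    (hortho : ∀ i j, star (θ i) ⬝ᵥ θ j = if i = j then 1 else 0)
    (heig : ∀ i, ρE.mulVec (θ i) = (lam i : ℂ) • θ i)
    (hlam : ∀ i, 0 < lam i) (hS : 0 < ∑ i, (lam i)⁻¹)
    (lamH : ℝ) (hlamH : lamH = (∑ i, (lam i)⁻¹)⁻¹) (ψ v : Fin d × Fin d → ℂ) :
    lamH * Complex.normSq (star ψ ⬝ᵥ v)
      ≤ (star v ⬝ᵥ ((ρE ⊗ₖ (Matrix.of fun k l => ∑ i, ψ (i, k) * star (ψ (i, l)))) *ᵥ v)).re := by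
  have hlamH0 : 0 ≤ lamH := by rw [hlamH]; exact inv_nonneg.mpr hS.le
  set w : Fin d → Fin d → ℂ := fun i m => star (qiZ θ ψ i m) ⬝ᵥ v with hw
  set c : Fin d → ℂ := fun i => ∑ m, θ i m * w i m with hc
  have hQ : star v ⬝ᵥ ((ρE ⊗ₖ (Matrix.of fun k l => ∑ i, ψ (i, k) * star (ψ (i, l)))) *ᵥ v)
      = ((∑ q : Fin d × Fin d, lam q.1 * Complex.normSq (w q.1 q.2) : ℝ) : ℂ) := by
    rw [qi_K_decomp ρE lam θ hortho heig ψ, qi_sum_mulVec, qi_dotProduct_sum]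
    push_cast
    refine Finset.sum_congr rfl fun q _ => ?_
    rw [smul_mulVec, dotProduct_smul, qi_rank_one_form]
    simp [hw, smul_eq_mul]
  rw [hQ, Complex.ofReal_re]
  have habs : ∀ i, Complex.normSq (c i) ≤ ∑ m, Complex.normSq (w i m) := by
    intro i
    have hθ : (∑ m, ‖θ i m‖ ^ 2) = 1 := by
      have h0 := hortho i i
      rw [qi_dot_self] at h0
      simp only [if_true] at h0
      have h1 : (∑ m, Complex.normSq (θ i m)) = 1 := by exact_mod_cast h0
      rw [← h1]
      exact Finset.sum_congr rfl fun m _ => by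
        rw [Complex.normSq_eq_norm_sq]
    have h1 : ‖c i‖ ≤ ∑ m, ‖θ i m‖ * ‖w i m‖ :=
      (norm_sum_le _ _).trans (le_of_eq (Finset.sum_congr rfl fun m _ => norm_mul _ _))
    have h2 : (∑ m, ‖θ i m‖ * ‖w i m‖) ^ 2 ≤ (∑ m, ‖θ i m‖ ^ 2) * ∑ m, ‖w i m‖ ^ 2 :=
      Finset.sum_mul_sq_le_sq_mul_sq _ _ _
    have h3 : Complex.normSq (c i) = ‖c i‖ ^ 2 := by
      rw [Complex.normSq_eq_norm_sq]
    rw [h3]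
    calc ‖c i‖ ^ 2 ≤ (∑ m, ‖θ i m‖ * ‖w i m‖) ^ 2 := by
          apply pow_le_pow_left₀ (norm_nonneg _) h1
      _ ≤ (∑ m, ‖θ i m‖ ^ 2) * ∑ m, ‖w i m‖ ^ 2 := h2
      _ = ∑ m, Complex.normSq (w i m) := by
          rw [hθ, one_mul]
          exact Finset.sum_congr rfl fun m _ => by
            rw [Complex.normSq_eq_norm_sq]
  have hCS2 : Complex.normSq (∑ i, c i) ≤ (∑ i, (lam i)⁻¹) * ∑ i, lam i * Complex.normSq (c i) := by
    have h1 : ‖∑ i, c i‖ ≤ ∑ i, ‖c i‖ := norm_sum_le _ _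
    have h2 := Finset.sum_mul_sq_le_sq_mul_sq Finset.univ
      (fun i => Real.sqrt (lam i)⁻¹) (fun i => Real.sqrt (lam i) * ‖c i‖)
    have h3 : ∀ i : Fin d, Real.sqrt (lam i)⁻¹ * (Real.sqrt (lam i) * ‖c i‖) = ‖c i‖ := by
      intro i
      rw [← mul_assoc, ← Real.sqrt_mul (inv_nonneg.mpr (hlam i).le), inv_mul_cancel₀ (hlam i).ne',
        Real.sqrt_one, one_mul]
    have h4 : ∀ i : Fin d, Real.sqrt (lam i)⁻¹ ^ 2 = (lam i)⁻¹ := fun i =>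
      Real.sq_sqrt (inv_nonneg.mpr (hlam i).le)
    have h5 : ∀ i : Fin d, (Real.sqrt (lam i) * ‖c i‖) ^ 2 = lam i * Complex.normSq (c i) := by
      intro i
      rw [mul_pow, Real.sq_sqrt (hlam i).le, Complex.normSq_eq_norm_sq]
    simp only [h3, h4, h5] at h2
    calc Complex.normSq (∑ i, c i) = ‖∑ i, c i‖ ^ 2 := by
          rw [Complex.normSq_eq_norm_sq]
      _ ≤ (∑ i, ‖c i‖) ^ 2 := pow_le_pow_left₀ (norm_nonneg _) h1 2
      _ ≤ (∑ i, (lam i)⁻¹) * ∑ i, lam i * Complex.normSq (c i) := h2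
  calc lamH * Complex.normSq (star ψ ⬝ᵥ v)
      = lamH * Complex.normSq (∑ i, c i) := by
        rw [qi_claim1 θ hortho ψ v]
    _ ≤ lamH * ((∑ i, (lam i)⁻¹) * ∑ i, lam i * Complex.normSq (c i)) :=
        mul_le_mul_of_nonneg_left hCS2 hlamH0
    _ = ∑ i, lam i * Complex.normSq (c i) := by
        rw [hlamH, ← mul_assoc, inv_mul_cancel₀ hS.ne', one_mul]
    _ ≤ ∑ i, lam i * ∑ m, Complex.normSq (w i m) :=
        Finset.sum_le_sum fun i _ => mul_le_mul_of_nonneg_left (habs i) (hlam i).le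
    _ = ∑ q : Fin d × Fin d, lam q.1 * Complex.normSq (w q.1 q.2) := by
        rw [Fintype.sum_prod_type]
        exact Finset.sum_congr rfl fun i _ => by rw [Finset.mul_sum]

/-- The discrimination operator. -/
noncomputable def qiOmega (ρE : Matrix (Fin d) (Fin d) ℂ) (a g : ℝ)
    (ψ : Fin d × Fin d → ℂ) : Matrix (Fin d × Fin d) (Fin d × Fin d) ℂ :=
  a • vecMulVec ψ (star ψ) +
    g • (ρE ⊗ₖ (Matrix.of fun k l => ∑ i, ψ (i, k) * star (ψ (i, l))))

lemma qi_main (ρE : Matrix (Fin d) (Fin d) ℂ) (lam : Fin d → ℝ)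
    (θ : Fin d → Fin d → ℂ)
    (hortho : ∀ i j, star (θ i) ⬝ᵥ θ j = if i = j then 1 else 0)
    (heig : ∀ i, ρE.mulVec (θ i) = (lam i : ℂ) • θ i)
    (hlam : ∀ i, 0 < lam i) (hS : 0 < ∑ i, (lam i)⁻¹)
    (hEtr : ρE.trace = 1)
    (lamH : ℝ) (hlamH : lamH = (∑ i, (lam i)⁻¹)⁻¹)
    (a g : ℝ) (hg : g < 0) (hpos : 0 < a + g * lamH)
    (ψ : Fin d × Fin d → ℂ) (hψ : ∑ p, ‖ψ p‖ ^ 2 = 1)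
    (hΩ : (qiOmega ρE a g ψ).IsHermitian) :
    traceNorm hΩ ≤ a - g + 2 * g * lamH ∧
      (∀ c : ℝ, (qiOmega ρE a g ψ) *ᵥ ψ = (c : ℂ) • ψ →
        2 * c - (a + g) ≤ traceNorm hΩ) := by
  have hψn : ∑ p, Complex.normSq (ψ p) = 1 := by
    rw [← hψ]
    exact Finset.sum_congr rfl fun p _ => by
      rw [Complex.normSq_eq_norm_sq]
  set t : Fin d × Fin d → ℝ :=
    fun j => Complex.normSq (star (⇑(hΩ.eigenvectorBasis j)) ⬝ᵥ ψ) with ht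
  have ht0 : ∀ j, 0 ≤ t j := fun j => Complex.normSq_nonneg _
  have hsum_t : ∑ j, t j = 1 := by rw [ht]; rw [qi_parseval hΩ ψ, hψn]
  -- quadratic form of Ω at any vector
  have hform : ∀ v : Fin d × Fin d → ℂ,
      star v ⬝ᵥ (qiOmega ρE a g ψ *ᵥ v)
        = (a : ℂ) * ((Complex.normSq (star ψ ⬝ᵥ v) : ℝ) : ℂ)
          + (g : ℂ) * (star v ⬝ᵥ
              ((ρE ⊗ₖ (Matrix.of fun k l => ∑ i, ψ (i, k) * star (ψ (i, l)))) *ᵥ v)) := by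
    intro v
    rw [qiOmega, add_mulVec, dotProduct_add, smul_mulVec, smul_mulVec,
      dotProduct_smul, dotProduct_smul, qi_rank_one_form]
    simp [Complex.real_smul]
  -- per-eigenvalue bound
  have hμt : ∀ j, hΩ.eigenvalues j ≤ (a + g * lamH) * t j := by
    intro j
    have he := hΩ.eigenvalues_eq j
    have hv := hform (⇑(hΩ.eigenvectorBasis j))
    have hflip : Complex.normSq (star ψ ⬝ᵥ ⇑(hΩ.eigenvectorBasis j)) = t j := by
      rw [ht, star_dotProduct]
      simp [Complex.star_def, Complex.normSq_conj]
    have hre : hΩ.eigenvalues j = a * t j + g *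
        (star (⇑(hΩ.eigenvectorBasis j)) ⬝ᵥ
          ((ρE ⊗ₖ (Matrix.of fun k l => ∑ i, ψ (i, k) * star (ψ (i, l)))) *ᵥ
            ⇑(hΩ.eigenvectorBasis j))).re := by
      rw [he, hv, hflip]
      simp [Complex.add_re, Complex.mul_re, Complex.ofReal_re, Complex.ofReal_im]
    have hkey := qi_key ρE lam θ hortho heig hlam hS lamH hlamH ψ (⇑(hΩ.eigenvectorBasis j))
    rw [hflip] at hkey
    nlinarith [hkey]
  -- trace identity
  have htr : ∑ j, hΩ.eigenvalues j = a + g := by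
    have h1 := qi_trace hΩ
    have h2 : (qiOmega ρE a g ψ).trace = ((a + g : ℝ) : ℂ) := by
      rw [qiOmega, trace_add, trace_smul, trace_smul, trace_kronecker, hEtr]
      have hP : (vecMulVec ψ (star ψ)).trace = 1 := by
        rw [Matrix.trace]
        have h3 : ∀ p, (vecMulVec ψ (star ψ)).diag p = ((Complex.normSq (ψ p) : ℝ) : ℂ) := by
          intro p
          simp [Matrix.diag_apply, vecMulVec_apply, Complex.star_def, Complex.mul_conj]
        simp_rw [h3]
        rw [← Complex.ofReal_sum, hψn, Complex.ofReal_one]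
      have hB : (Matrix.of fun k l => ∑ i, ψ (i, k) * star (ψ (i, l))).trace = 1 := by
        rw [Matrix.trace]
        have h3 : ∀ k : Fin d, (Matrix.of fun k l => ∑ i, ψ (i, k) * star (ψ (i, l))).diag k
            = ∑ i, ((Complex.normSq (ψ (i, k)) : ℝ) : ℂ) := by
          intro k
          simp [Matrix.diag_apply, Complex.star_def, Complex.mul_conj]
        simp_rw [h3]
        have h4 : ∑ k, ∑ i : Fin d, ((Complex.normSq (ψ (i, k)) : ℝ) : ℂ)
            = ((∑ k, ∑ i : Fin d, Complex.normSq (ψ (i, k)) : ℝ) : ℂ) := by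
          push_cast; rfl
        have h5 : ∑ k, ∑ i : Fin d, Complex.normSq (ψ (i, k)) = 1 := by
          rw [← hψn, Fintype.sum_prod_type]
          exact Finset.sum_comm
        rw [h4, h5, Complex.ofReal_one]
      rw [hP, hB]
      simp only [mul_one, smul_eq_mul]
      push_cast
      simp [Complex.real_smul]
    rw [h2] at h1
    exact_mod_cast h1
  -- |x| = 2 * max x 0 - x
  have habs : ∀ x : ℝ, |x| = 2 * max x 0 - x := by
    intro x
    rcases le_total 0 x with h | h
    · rw [abs_of_nonneg h, max_eq_left h]; ring
    · rw [abs_of_nonpos h, max_eq_right h]; ring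
  have hTN : traceNorm hΩ = 2 * (∑ j, max (hΩ.eigenvalues j) 0) - (a + g) := by
    rw [traceNorm, ← htr, Finset.mul_sum, ← Finset.sum_sub_distrib]
    exact Finset.sum_congr rfl fun j _ => habs _
  constructor
  · -- upper bound
    have hmax : ∀ j, max (hΩ.eigenvalues j) 0 ≤ (a + g * lamH) * t j := by
      intro j
      rcases le_total (hΩ.eigenvalues j) 0 with h | h
      · rw [max_eq_right h]
        exact mul_nonneg hpos.le (ht0 j)
      · rw [max_eq_left h]
        exact hμt j
    have hsum : ∑ j, max (hΩ.eigenvalues j) 0 ≤ a + g * lamH := by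
      calc ∑ j, max (hΩ.eigenvalues j) 0 ≤ ∑ j, (a + g * lamH) * t j :=
            Finset.sum_le_sum fun j _ => hmax j
        _ = (a + g * lamH) * ∑ j, t j := by rw [Finset.mul_sum]
        _ = a + g * lamH := by rw [hsum_t, mul_one]
    rw [hTN]
    linarith
  · -- lower bound for eigenvectors
    intro c hc
    have hq := qi_quad_expand hΩ ψ
    have hq2 : star ψ ⬝ᵥ (qiOmega ρE a g ψ *ᵥ ψ) = ((c : ℝ) : ℂ) := by
      rw [hc, dotProduct_smul, smul_eq_mul, qi_dot_self, hψn]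
      simp
    have hq3 : ((∑ j, hΩ.eigenvalues j * t j : ℝ) : ℂ) = ((c : ℝ) : ℂ) := by
      rw [← hq2, hq]
      push_cast
      exact Finset.sum_congr rfl fun j _ => by rw [ht]
    have hq4 : ∑ j, hΩ.eigenvalues j * t j = c := by exact_mod_cast hq3
    have htle : ∀ j, t j ≤ 1 := by
      intro j
      rw [← hsum_t]
      exact Finset.single_le_sum (fun i _ => ht0 i) (Finset.mem_univ j)
    have hlow : ∀ j, hΩ.eigenvalues j * t j ≤ max (hΩ.eigenvalues j) 0 := by
      intro j
      rcases le_total 0 (hΩ.eigenvalues j) with h | h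
      · calc hΩ.eigenvalues j * t j ≤ hΩ.eigenvalues j * 1 :=
              mul_le_mul_of_nonneg_left (htle j) h
          _ = hΩ.eigenvalues j := mul_one _
          _ ≤ max (hΩ.eigenvalues j) 0 := le_max_left _ _
      · calc hΩ.eigenvalues j * t j ≤ 0 := mul_nonpos_iff.mpr (Or.inr ⟨h, ht0 j⟩)
          _ ≤ max (hΩ.eigenvalues j) 0 := le_max_right _ _
    have hsum2 : c ≤ ∑ j, max (hΩ.eigenvalues j) 0 := by
      rw [← hq4]
      exact Finset.sum_le_sum fun j _ => hlow j
    rw [hTN]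
    linarith

lemma qi_mulVec_sum {n : Type*} [Fintype n] {ι : Type*} (s : Finset ι)
    (M : Matrix n n ℂ) (v : ι → n → ℂ) :
    M *ᵥ (∑ i ∈ s, v i) = ∑ i ∈ s, M *ᵥ v i := by
  ext p
  simp only [mulVec, dotProduct, Finset.sum_apply, Finset.mul_sum]
  rw [Finset.sum_comm]

lemma qi_kron_mulVec (A B : Matrix (Fin d) (Fin d) ℂ) (x y : Fin d → ℂ) :
    (A ⊗ₖ B) *ᵥ (fun p : Fin d × Fin d => x p.1 * y p.2)
      = fun q : Fin d × Fin d => (A *ᵥ x) q.1 * (B *ᵥ y) q.2 := by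
  ext ⟨j, k⟩
  simp only [mulVec, dotProduct, Fintype.sum_prod_type, Matrix.kroneckerMap_apply]
  rw [Finset.sum_mul_sum]
  exact Finset.sum_congr rfl fun j' _ => Finset.sum_congr rfl fun k' _ => by ring

lemma qi_psih (ρE : Matrix (Fin d) (Fin d) ℂ) (lam : Fin d → ℝ)
    (θ : Fin d → Fin d → ℂ)
    (hortho : ∀ i j, star (θ i) ⬝ᵥ θ j = if i = j then 1 else 0)
    (heig : ∀ i, ρE.mulVec (θ i) = (lam i : ℂ) • θ i)
    (hlam : ∀ i, 0 < lam i) (hS : 0 < ∑ i, (lam i)⁻¹)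
    (lamH : ℝ) (hlamH : lamH = (∑ i, (lam i)⁻¹)⁻¹)
    (ψh : Fin d × Fin d → ℂ)
    (hψh : ψh = fun p => ∑ i, (Real.sqrt (lamH / lam i) : ℂ) * θ i p.1 * θ i p.2) :
    (∑ p, ‖ψh p‖ ^ 2 = 1) ∧ (star ψh ⬝ᵥ ψh = 1) ∧
      ((ρE ⊗ₖ (Matrix.of fun k l => ∑ i, ψh (i, k) * star (ψh (i, l)))) *ᵥ ψh
        = (lamH : ℂ) • ψh) := by
  have hlamH0 : 0 ≤ lamH := by rw [hlamH]; exact inv_nonneg.mpr hS.le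
  have halpha : ∀ b, ((Real.sqrt (lamH / lam b) : ℝ) : ℂ) * ((Real.sqrt (lamH / lam b) : ℝ) : ℂ)
      = ((lamH / lam b : ℝ) : ℂ) := by
    intro b
    rw [← Complex.ofReal_mul, Real.mul_self_sqrt (div_nonneg hlamH0 (hlam b).le)]
  -- row sums
  have hrow : ∀ m b : Fin d, ∑ l, star (ψh (m, l)) * θ b l
      = (Real.sqrt (lamH / lam b) : ℂ) * star (θ b m) := by
    intro m b
    calc ∑ l, star (ψh (m, l)) * θ b l
        = ∑ l, ∑ i, ((Real.sqrt (lamH / lam i) : ℂ) * star (θ i m)) * (star (θ i l) * θ b l) := by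
          refine Finset.sum_congr rfl fun l _ => ?_
          rw [hψh]
          simp only [star_sum, Finset.sum_mul, star_mul']
          refine Finset.sum_congr rfl fun i _ => ?_
          simp only [Complex.star_def, Complex.conj_ofReal]
          ring
      _ = ∑ i, ((Real.sqrt (lamH / lam i) : ℂ) * star (θ i m)) * (∑ l, star (θ i l) * θ b l) := by
          rw [Finset.sum_comm]
          exact Finset.sum_congr rfl fun i _ => by rw [Finset.mul_sum]
      _ = ∑ i, ((Real.sqrt (lamH / lam i) : ℂ) * star (θ i m)) * (if i = b then 1 else 0) := by
          refine Finset.sum_congr rfl fun i _ => ?_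
          rw [show (∑ l, star (θ i l) * θ b l) = star (θ i) ⬝ᵥ θ b from rfl, hortho i b]
      _ = (Real.sqrt (lamH / lam b) : ℂ) * star (θ b m) := by
          simp [mul_ite, Finset.sum_ite_eq]
  have hcol : ∀ k b : Fin d, ∑ m, star (θ b m) * ψh (m, k)
      = (Real.sqrt (lamH / lam b) : ℂ) * θ b k := by
    intro k b
    calc ∑ m, star (θ b m) * ψh (m, k)
        = ∑ m, ∑ i, ((Real.sqrt (lamH / lam i) : ℂ) * θ i k) * (star (θ b m) * θ i m) := by
          refine Finset.sum_congr rfl fun m _ => ?_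
          rw [hψh]
          simp only [Finset.mul_sum]
          exact Finset.sum_congr rfl fun i _ => by ring
      _ = ∑ i, ((Real.sqrt (lamH / lam i) : ℂ) * θ i k) * (∑ m, star (θ b m) * θ i m) := by
          rw [Finset.sum_comm]
          exact Finset.sum_congr rfl fun i _ => by rw [Finset.mul_sum]
      _ = ∑ i, ((Real.sqrt (lamH / lam i) : ℂ) * θ i k) * (if b = i then 1 else 0) := by
          refine Finset.sum_congr rfl fun i _ => ?_
          rw [show (∑ m, star (θ b m) * θ i m) = star (θ b) ⬝ᵥ θ i from rfl, hortho b i]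
      _ = (Real.sqrt (lamH / lam b) : ℂ) * θ b k := by
          simp [mul_ite, Finset.sum_ite_eq']
  -- normalization
  have hdot : star ψh ⬝ᵥ ψh = 1 := by
    have hθθ : ∀ i : Fin d, ∑ m, θ i m * star (θ i m) = 1 := by
      intro i
      have h := hortho i i
      simp only [if_true] at h
      rw [← h]
      exact Finset.sum_congr rfl fun m _ => by rw [mul_comm]; rfl
    calc star ψh ⬝ᵥ ψh = ∑ m, ∑ k, star (ψh (m, k)) * ψh (m, k) := by
          rw [dotProduct, Fintype.sum_prod_type]
          rfl
      _ = ∑ m, ∑ i, ((Real.sqrt (lamH / lam i) : ℂ) * θ i m) * (∑ k, star (ψh (m, k)) * θ i k) := by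
          refine Finset.sum_congr rfl fun m _ => ?_
          calc ∑ k, star (ψh (m, k)) * ψh (m, k)
              = ∑ k, ∑ i, ((Real.sqrt (lamH / lam i) : ℂ) * θ i m) * (star (ψh (m, k)) * θ i k) := by
                refine Finset.sum_congr rfl fun k _ => ?_
                have hk : ψh (m, k) = ∑ i, (Real.sqrt (lamH / lam i) : ℂ) * θ i m * θ i k := by
                  rw [hψh]
                nth_rewrite 2 [hk]
                rw [Finset.mul_sum]
                exact Finset.sum_congr rfl fun i _ => by ring
            _ = ∑ i, ((Real.sqrt (lamH / lam i) : ℂ) * θ i m) * (∑ k, star (ψh (m, k)) * θ i k) := by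
                rw [Finset.sum_comm]
                exact Finset.sum_congr rfl fun i _ => by rw [Finset.mul_sum]
      _ = ∑ m, ∑ i, ((lamH / lam i : ℝ) : ℂ) * (θ i m * star (θ i m)) := by
          refine Finset.sum_congr rfl fun m _ => Finset.sum_congr rfl fun i _ => ?_
          rw [hrow m i, ← halpha i]
          ring
      _ = ∑ i, ((lamH / lam i : ℝ) : ℂ) * (∑ m, θ i m * star (θ i m)) := by
          rw [Finset.sum_comm]
          exact Finset.sum_congr rfl fun i _ => by rw [Finset.mul_sum]
      _ = ∑ i, ((lamH / lam i : ℝ) : ℂ) := by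
          simp_rw [hθθ]
          simp
      _ = 1 := by
          rw [← Complex.ofReal_sum]
          have : ∑ i, lamH / lam i = 1 := by
            simp_rw [div_eq_mul_inv, ← Finset.mul_sum]
            rw [hlamH, inv_mul_cancel₀ hS.ne']
          rw [this, Complex.ofReal_one]
  have hnorm1 : ∑ p, ‖ψh p‖ ^ 2 = 1 := by
    have h := hdot
    rw [qi_dot_self] at h
    have h2 : ∑ p, Complex.normSq (ψh p) = 1 := by exact_mod_cast h
    rw [← h2]
    exact Finset.sum_congr rfl fun p _ => by
      rw [Complex.normSq_eq_norm_sq]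
  -- ρB action on θ b
  have hBval : ∀ b : Fin d, (Matrix.of fun k l => ∑ i, ψh (i, k) * star (ψh (i, l))) *ᵥ θ b
      = ((lamH / lam b : ℝ) : ℂ) • θ b := by
    intro b
    ext k
    calc ((Matrix.of fun k l => ∑ i, ψh (i, k) * star (ψh (i, l))) *ᵥ θ b) k
        = ∑ m, ψh (m, k) * (∑ l, star (ψh (m, l)) * θ b l) := by
          simp only [mulVec, dotProduct, Matrix.of_apply, Finset.sum_mul]
          rw [Finset.sum_comm]
          exact Finset.sum_congr rfl fun m _ => by
            rw [Finset.mul_sum]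
            exact Finset.sum_congr rfl fun l _ => by ring
      _ = (Real.sqrt (lamH / lam b) : ℂ) * ∑ m, star (θ b m) * ψh (m, k) := by
          simp_rw [hrow]
          rw [Finset.mul_sum]
          exact Finset.sum_congr rfl fun m _ => by ring
      _ = ((lamH / lam b : ℝ) : ℂ) * θ b k := by
          rw [hcol k b, ← halpha b]
          ring
      _ = (((lamH / lam b : ℝ) : ℂ) • θ b) k := rfl
  -- K action on ψh
  have hψh_sum : ψh = ∑ i, (Real.sqrt (lamH / lam i) : ℂ) •
      (fun p : Fin d × Fin d => θ i p.1 * θ i p.2) := by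
    funext p
    rw [hψh]
    simp only [Finset.sum_apply, Pi.smul_apply, smul_eq_mul]
    exact Finset.sum_congr rfl fun i _ => by ring
  have hK : (ρE ⊗ₖ (Matrix.of fun k l => ∑ i, ψh (i, k) * star (ψh (i, l)))) *ᵥ ψh
      = (lamH : ℂ) • ψh := by
    have hterm : ∀ i : Fin d,
        (ρE ⊗ₖ (Matrix.of fun k l => ∑ i, ψh (i, k) * star (ψh (i, l)))) *ᵥ
          ((Real.sqrt (lamH / lam i) : ℂ) • (fun p : Fin d × Fin d => θ i p.1 * θ i p.2))
        = (lamH : ℂ) • ((Real.sqrt (lamH / lam i) : ℂ) •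
            (fun p : Fin d × Fin d => θ i p.1 * θ i p.2)) := by
      intro i
      rw [mulVec_smul, qi_kron_mulVec, heig, hBval]
      funext q
      simp only [Pi.smul_apply, smul_eq_mul]
      have h2 : (lam i : ℂ) * ((lamH / lam i : ℝ) : ℂ) = (lamH : ℂ) := by
        rw [← Complex.ofReal_mul]
        congr 1
        rw [mul_comm, div_mul_cancel₀ _ (hlam i).ne']
      linear_combination ((Real.sqrt (lamH / lam i) : ℂ) * θ i q.1 * θ i q.2) * h2
    set M := ρE ⊗ₖ (Matrix.of fun k l => ∑ i, ψh (i, k) * star (ψh (i, l))) with hM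
    conv_lhs => rw [hψh_sum]
    rw [qi_mulVec_sum]
    calc ∑ i, M *ᵥ ((Real.sqrt (lamH / lam i) : ℂ) • (fun p : Fin d × Fin d => θ i p.1 * θ i p.2))
        = ∑ i, (lamH : ℂ) • ((Real.sqrt (lamH / lam i) : ℂ) •
            (fun p : Fin d × Fin d => θ i p.1 * θ i p.2)) :=
          Finset.sum_congr rfl fun i _ => hterm i
      _ = (lamH : ℂ) • ψh := by rw [hψh_sum, Finset.smul_sum]
  exact ⟨hnorm1, hdot, hK⟩

/-- **Region III, quantum illumination.** Let `ρ_E` be positive definite with eigenvalues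
`λᵢ > 0`, orthonormal eigenvectors `θᵢ`, and `λ_h := (Σᵢ λᵢ⁻¹)⁻¹`.  Let
`γ := p₁(1-η) - p₀` and assume `γ < 0` and `p₁η + γλ_h > 0` (Region III).  Then (a) for
every unit bipartite vector `ψ` with reduced state `ρ_B` on the second factor,
`‖p₁η·|ψ⟩⟨ψ| + γ·(ρ_E ⊗ ρ_B)‖₁ ≤ p₁η − γ + 2γλ_h`; and (b) equality holds for
`ψ_h := Σᵢ √(λ_h/λᵢ)·θᵢ ⊗ θᵢ`, for which the Helstrom error `(1 − ‖Ω_q‖₁)/2` equals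
`p₀ + γ(1 − λ_h)`. -/
theorem region_III_quantum {d : ℕ}
    (ρE : Matrix (Fin d) (Fin d) ℂ) (hE : ρE.PosDef) (hEtr : ρE.trace = 1)
    (lam : Fin d → ℝ) (hlam : ∀ i, 0 < lam i)
    (θ : Fin d → Fin d → ℂ)
    (hortho : ∀ i j, star (θ i) ⬝ᵥ θ j = if i = j then 1 else 0)
    (heig : ∀ i, ρE.mulVec (θ i) = (lam i : ℂ) • θ i)
    (lamH : ℝ) (hlamH : lamH = (∑ i, (lam i)⁻¹)⁻¹)
    (p₀ p₁ η : ℝ) (hp₀ : 0 ≤ p₀) (hp₁ : 0 ≤ p₁) (hsum : p₀ + p₁ = 1)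
    (hη₀ : 0 ≤ η) (hη₁ : η ≤ 1)
    (hγ : p₁ * (1 - η) - p₀ < 0)
    (hpos : 0 < p₁ * η + (p₁ * (1 - η) - p₀) * lamH)
    (ψh : Fin d × Fin d → ℂ)
    (hψh : ψh = fun p => ∑ i, (Real.sqrt (lamH / lam i) : ℂ) * θ i p.1 * θ i p.2) :
    (∀ ψ : Fin d × Fin d → ℂ, ∑ p, ‖ψ p‖ ^ 2 = 1 →
      ∀ hΩ : ((p₁ * η) • vecMulVec ψ (star ψ) + (p₁ * (1 - η) - p₀) •
          (ρE ⊗ₖ (Matrix.of fun k l => ∑ i, ψ (i, k) * star (ψ (i, l))))).IsHermitian,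
        traceNorm hΩ ≤ p₁ * η - (p₁ * (1 - η) - p₀) + 2 * (p₁ * (1 - η) - p₀) * lamH) ∧
    (∀ hΩ : ((p₁ * η) • vecMulVec ψh (star ψh) + (p₁ * (1 - η) - p₀) •
          (ρE ⊗ₖ (Matrix.of fun k l => ∑ i, ψh (i, k) * star (ψh (i, l))))).IsHermitian,
        traceNorm hΩ = p₁ * η - (p₁ * (1 - η) - p₀) + 2 * (p₁ * (1 - η) - p₀) * lamH ∧
        (1 - traceNorm hΩ) / 2 = p₀ + (p₁ * (1 - η) - p₀) * (1 - lamH)) := by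
  have hd : 0 < d := by
    rcases Nat.eq_zero_or_pos d with h0 | h0
    · exfalso; subst h0; simp [Matrix.trace] at hEtr
    · exact h0
  have hS : 0 < ∑ i, (lam i)⁻¹ := by
    have : Nonempty (Fin d) := Fin.pos_iff_nonempty.mp hd
    exact Finset.sum_pos (fun i _ => inv_pos.mpr (hlam i)) Finset.univ_nonempty
  constructor
  · intro ψ hψn hΩ
    exact (qi_main ρE lam θ hortho heig hlam hS hEtr lamH hlamH (p₁ * η) (p₁ * (1 - η) - p₀)
      hγ hpos ψ hψn hΩ).1
  · intro hΩ
    obtain ⟨hn1, hdot, hK⟩ := qi_psih ρE lam θ hortho heig hlam hS lamH hlamH ψh hψh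
    have hmain := qi_main ρE lam θ hortho heig hlam hS hEtr lamH hlamH (p₁ * η)
      (p₁ * (1 - η) - p₀) hγ hpos ψh hn1 hΩ
    have hOeig : qiOmega ρE (p₁ * η) (p₁ * (1 - η) - p₀) ψh *ᵥ ψh
        = ((p₁ * η + (p₁ * (1 - η) - p₀) * lamH : ℝ) : ℂ) • ψh := by
      rw [qiOmega, add_mulVec, smul_mulVec, smul_mulVec, qi_rank_one_mulVec,
        hdot, hK]
      funext p
      simp only [Pi.add_apply, Pi.smul_apply, one_smul, smul_eq_mul, Complex.real_smul]
      push_cast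
      ring
    have hlow := hmain.2 (p₁ * η + (p₁ * (1 - η) - p₀) * lamH) hOeig
    have hup := hmain.1
    have hTN : traceNorm hΩ = p₁ * η - (p₁ * (1 - η) - p₀) +
        2 * (p₁ * (1 - η) - p₀) * lamH := by
      have h1 := hlow
      have h2 := hup
      exact le_antisymm h2 (le_trans (le_of_eq (by ring)) h1)
    refine ⟨hTN, ?_⟩
    rw [hTN]
    linarith [hsum]
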